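/- Let A = a_1⋯a_p ∈ 𝒜^* be a word such that π matches A at no position. Then reading A from the initial state of S_π ends in a non-final state ⟨X,t⟩, where t is the length of the longest suffix of A consisting only of the letter 1, and X = {x ∈ R_π : x ≤ p − t and π_1⋯π_x matches the length-x suffix of a_1⋯a_{p−t} at its starting position (i.e., a_{p−t−x+i} ∈ π_i for all i ∈ [1..x])}. -/

import Mathlib

variable {A : Type*}

/-- One transition of the subset seed automaton `S_π`: the state `none` is the final sink
state, a state `some (X, t)` is the non-final state `⟨X,t⟩`. -/
def seedStep [DecidableEq A] (one : A) (π : ℕ → Finset A) (s : ℕ) :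
    Option (Finset ℕ × ℕ) → A → Option (Finset ℕ × ℕ)
  | none, _ => none
  | some (X, t), a =>
    if a = one then
      if X.sup id + (t + 1) = s then none else some (X, t + 1)
    else
      let Y : Finset ℕ := ((Finset.Icc 1 (t + 1)).filter fun x => a ∈ π x) ∪
        ((X.filter fun x => x + t + 1 ≤ s ∧ a ∈ π (x + t + 1)).image fun x => x + t + 1)
      if Y.sup id = s then none else some (Y, 0)

/-- Reading a word from a state, applying transitions letter by letter. -/
def seedRead [DecidableEq A] (one : A) (π : ℕ → Finset A) (s : ℕ)
    (q : Option (Finset ℕ × ℕ)) (w : List A) : Option (Finset ℕ × ℕ) :=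
  w.foldl (seedStep one π s) q

/-- `π` matches the alignment `w` at the (1-based) position `p`. -/
def seedMatches (one : A) (π : ℕ → Finset A) (s : ℕ) (w : List A) (p : ℕ) : Prop :=
  1 ≤ p ∧ p + s ≤ w.length + 1 ∧
    ∀ i, 1 ≤ i → i ≤ s → w.getD (p + i - 2) one ∈ π i


lemma tw_le (one : A) [DecidableEq A] (u : List A) :
    (u.reverse.takeWhile fun a => a = one).length ≤ u.length := by
  have := (List.takeWhile_prefix (l := u.reverse) (fun a => decide (a = one))).length_le
  simpa using this

lemma trailing_one (one : A) [DecidableEq A] (u : List A) {n : ℕ}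
    (hn : u.length - (u.reverse.takeWhile fun a => a = one).length ≤ n) :
    u.getD n one = one := by
  by_cases h : n < u.length
  · have hT := tw_le one u
    have hk : u.length - 1 - n < (u.reverse.takeWhile fun a => a = one).length := by omega
    rw [List.getD_eq_getElem u one h]
    have h1 : u.reverse[u.length - 1 - n]'(by simp; omega) = u[n] := by
      rw [List.getElem_reverse]
      congr 1
      omega
    rw [← h1]
    have h2 := (List.takeWhile_prefix (l := u.reverse) (fun a => decide (a = one))).getElem hk
    have h3 := List.mem_takeWhile_imp (List.getElem_mem hk)
    rw [h2] at h3
    simpa using h3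
  · exact List.getD_eq_default u one (by omega)

lemma takeWhile_getElem_len {p : A → Bool} :
    ∀ (l : List A) (h : (l.takeWhile p).length < l.length), p (l[(l.takeWhile p).length]'h) = false := by
  intro l
  induction l with
  | nil => simp
  | cons a l ih =>
    by_cases hpa : p a
    · intro h
      simp only [List.takeWhile_cons, hpa, if_true, List.length_cons] at h ⊢
      simpa using ih (by omega)
    · intro h
      simp only [List.takeWhile_cons, hpa] at h ⊢
      simp [hpa]

lemma boundary_ne (one : A) [DecidableEq A] (u : List A)
    (h : (u.reverse.takeWhile fun a => a = one).length < u.length) :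
    u.getD (u.length - (u.reverse.takeWhile fun a => a = one).length - 1) one ≠ one := by
  set T := (u.reverse.takeWhile fun a => a = one).length with hT
  have hlt : u.length - T - 1 < u.length := by omega
  rw [List.getD_eq_getElem u one hlt]
  have h1 : u.reverse[T]'(by simp; omega) = u[u.length - T - 1]'hlt := by
    rw [List.getElem_reverse]
    congr 1
    omega
  have h2 := takeWhile_getElem_len (p := fun a => decide (a = one)) u.reverse (by simpa using h)
  rw [h1] at h2
  simpa using h2

lemma prefix_getD {u w : List A} (h : u <+: w) {n : ℕ} (hn : n < u.length) (d : A) :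
    w.getD n d = u.getD n d := by
  rw [List.getD_eq_getElem u d hn, List.getD_eq_getElem w d (by have := h.length_le; omega)]
  exact (h.getElem hn).symm

lemma tw_concat_one (one : A) [DecidableEq A] (u : List A) :
    ((u ++ [one]).reverse.takeWhile fun a => a = one).length
      = (u.reverse.takeWhile fun a => a = one).length + 1 := by
  simp [List.takeWhile_cons]

lemma tw_concat_ne (one : A) [DecidableEq A] (u : List A) {a : A} (ha : a ≠ one) :
    ((u ++ [a]).reverse.takeWhile fun a => a = one).length = 0 := by
  simp [List.takeWhile_cons, ha]

lemma getD_concat_lt (u : List A) (a d : A) {n : ℕ} (hn : n < u.length) :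
    (u ++ [a]).getD n d = u.getD n d := by
  rw [List.getD_eq_getElem u d hn, List.getD_eq_getElem (u ++ [a]) d (by simp; omega)]
  exact List.getElem_append_left hn

lemma getD_concat_self (u : List A) (a d : A) :
    (u ++ [a]).getD u.length d = a := by
  rw [List.getD_eq_getElem (u ++ [a]) d (by simp)]
  exact List.getElem_concat_length rfl _

lemma matches_mono (one : A) (π : ℕ → Finset A) (s : ℕ) (hs : 1 ≤ s) {u w : List A}
    (h : u <+: w) {p : ℕ} (hm : seedMatches one π s u p) : seedMatches one π s w p := by
  obtain ⟨h1, h2, h3⟩ := hm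
  refine ⟨h1, by have := h.length_le; omega, fun i hi1 hi2 => ?_⟩
  rw [prefix_getD h (by omega) one]
  exact h3 i hi1 hi2

lemma key [DecidableEq A] (one : A) (π : ℕ → Finset A) (s : ℕ)
    (hs : 1 ≤ s) (hone : ∀ i, 1 ≤ i → i ≤ s → one ∈ π i) (w : List A)
    (hnomatch : ∀ p, ¬ seedMatches one π s w p) :
    ∀ u, u <+: w → ∃ X t, seedRead one π s (some (∅, 0)) u = some (X, t) ∧
      t = (u.reverse.takeWhile fun a => a = one).length ∧
      ∀ x, x ∈ X ↔
        (1 ≤ x ∧ x ≤ s ∧ π x ≠ ({one} : Finset A) ∧ x ≤ u.length - t ∧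
          ∀ i, 1 ≤ i → i ≤ x → u.getD (u.length - t - x + i - 1) one ∈ π i) := by
  intro u
  induction u using List.reverseRecOn with
  | nil =>
    intro _
    refine ⟨∅, 0, rfl, by simp, fun x => ?_⟩
    simp only [Finset.notMem_empty, false_iff]
    rintro ⟨h1, -, -, h4, -⟩
    simp at h4
    omega
  | append_singleton u a ih =>
    intro hpre
    have hpu : u <+: w := (List.prefix_append u [a]).trans hpre
    obtain ⟨X, t, hread, ht, hX⟩ := ih hpu
    -- no matches in u and u ++ [a]
    have hmu : ∀ p, ¬ seedMatches one π s u p :=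
      fun p hm => hnomatch p (matches_mono one π s hs hpu hm)
    have hmu' : ∀ p, ¬ seedMatches one π s (u ++ [a]) p :=
      fun p hm => hnomatch p (matches_mono one π s hs hpre hm)
    have hts : t ≤ u.length := ht ▸ tw_le one u
    have hgd : ∀ n, u.length - t ≤ n → u.getD n one = one := by
      intro n hn
      exact trailing_one one u (by omega)
    -- t < s
    have htlt : t < s := by
      by_contra hc
      push_neg at hc
      refine hmu (u.length - s + 1) ⟨by omega, by omega, fun i hi1 hi2 => ?_⟩
      rw [hgd _ (by omega)]
      exact hone i hi1 hi2
    have hstep : seedRead one π s (some (∅, 0)) (u ++ [a])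
        = seedStep one π s (some (X, t)) a := by
      rw [seedRead] at hread
      rw [seedRead, List.foldl_append, hread]
      rfl
    by_cases ha : a = one
    · subst ha
      -- guard is false
      have hguard : ¬ (X.sup id + (t + 1) = s) := by
        intro hsup
        rcases X.eq_empty_or_nonempty with hXe | hXn
        · -- X empty : sup = 0, so t + 1 = s
          rw [hXe, Finset.sup_empty] at hsup
          have hsup' : t + 1 = s := by simpa using hsup
          refine hmu' (u.length - t + 1) ⟨by omega, by simp; omega, fun i hi1 hi2 => ?_⟩
          have : (u ++ [a]).getD (u.length - t + 1 + i - 2) a = a := by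
            apply trailing_one a (u ++ [a])
            rw [tw_concat_one a u, ← ht]
            simp
            omega
          rw [this]
          exact hone i hi1 hi2
        · obtain ⟨x, hxX, hsupx⟩ := Finset.exists_mem_eq_sup X hXn id
          rw [hsupx] at hsup
          simp only [id_eq] at hsup
          obtain ⟨hx1, hx2, hx3, hx4, hx5⟩ := (hX x).mp hxX
          refine hmu' (u.length - t - x + 1) ⟨by omega, by simp; omega, fun i hi1 hi2 => ?_⟩
          by_cases hix : i ≤ x
          · have hidx : u.length - t - x + 1 + i - 2 = u.length - t - x + i - 1 := by omega
            rw [hidx, getD_concat_lt u a a (by omega)]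
            exact hx5 i hi1 hix
          · have : (u ++ [a]).getD (u.length - t - x + 1 + i - 2) a = a := by
              apply trailing_one a (u ++ [a])
              rw [tw_concat_one a u, ← ht]
              simp
              omega
            rw [this]
            exact hone i hi1 hi2
      refine ⟨X, t + 1, ?_, ?_, fun x => ?_⟩
      · rw [hstep]
        simp [seedStep, hguard]
      · rw [tw_concat_one a u, ← ht]
      · rw [hX x]
        have hlen : (u ++ [a]).length = u.length + 1 := by simp
        constructor
        · rintro ⟨h1, h2, h3, h4, h5⟩
          refine ⟨h1, h2, h3, by omega, fun i hi1 hi2 => ?_⟩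
          have hidx : (u ++ [a]).length - (t + 1) - x + i - 1
              = u.length - t - x + i - 1 := by omega
          rw [hidx, getD_concat_lt u a a (by omega)]
          exact h5 i hi1 hi2
        · rintro ⟨h1, h2, h3, h4, h5⟩
          refine ⟨h1, h2, h3, by omega, fun i hi1 hi2 => ?_⟩
          have h4' : x ≤ u.length - t := by omega
          have hidx : (u ++ [a]).length - (t + 1) - x + i - 1
              = u.length - t - x + i - 1 := by omega
          have := h5 i hi1 hi2
          rw [hidx, getD_concat_lt u a a (by omega)] at this
          exact this
    · set Yval : Finset ℕ := ((Finset.Icc 1 (t + 1)).filter fun x => a ∈ π x) ∪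
        ((X.filter fun x => x + t + 1 ≤ s ∧ a ∈ π (x + t + 1)).image fun x => x + t + 1) with hYdef
      have hY : ∀ y, y ∈ Yval ↔ (1 ≤ y ∧ y ≤ s ∧ π y ≠ ({one} : Finset A) ∧ y ≤ u.length + 1 ∧
          ∀ i, 1 ≤ i → i ≤ y → (u ++ [a]).getD (u.length + 1 - y + i - 1) one ∈ π i) := by
        intro y
        constructor
        · intro hyY
          rcases Finset.mem_union.mp hyY with hl | hr
          · obtain ⟨hIcc, hay⟩ := Finset.mem_filter.mp hl
            obtain ⟨hy1, hy2⟩ := Finset.mem_Icc.mp hIcc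
            have hyne : π y ≠ ({one} : Finset A) := by
              intro h
              rw [h] at hay
              exact ha (Finset.mem_singleton.mp hay)
            refine ⟨hy1, by omega, hyne, by omega, fun i hi1 hi2 => ?_⟩
            by_cases hiy : i = y
            · subst hiy
              rw [show u.length + 1 - i + i - 1 = u.length by omega, getD_concat_self]
              exact hay
            · rw [getD_concat_lt u a one (by omega), hgd _ (by omega)]
              exact hone i hi1 (by omega)
          · obtain ⟨x, hxf, hxy⟩ := Finset.mem_image.mp hr
            obtain ⟨hxX, hxs, hax⟩ := Finset.mem_filter.mp hxf
            obtain ⟨hx1, hx2, hx3, hx4, hx5⟩ := (hX x).mp hxX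
            subst hxy
            have hyne : π (x + t + 1) ≠ ({one} : Finset A) := by
              intro h
              rw [h] at hax
              exact ha (Finset.mem_singleton.mp hax)
            refine ⟨by omega, hxs, hyne, by omega, fun i hi1 hi2 => ?_⟩
            by_cases hiy : i = x + t + 1
            · subst hiy
              rw [show u.length + 1 - (x + t + 1) + (x + t + 1) - 1 = u.length by omega,
                getD_concat_self]
              exact hax
            · by_cases hix : i ≤ x
              · rw [show u.length + 1 - (x + t + 1) + i - 1 = u.length - t - x + i - 1 by omega,
                  getD_concat_lt u a one (by omega)]
                exact hx5 i hi1 hix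
              · rw [getD_concat_lt u a one (by omega), hgd _ (by omega)]
                exact hone i hi1 (by omega)
        · rintro ⟨h1, h2, h3, h4, h5⟩
          have hay : a ∈ π y := by
            have := h5 y h1 le_rfl
            rwa [show u.length + 1 - y + y - 1 = u.length by omega, getD_concat_self] at this
          by_cases hy : y ≤ t + 1
          · apply Finset.mem_union_left
            exact Finset.mem_filter.mpr ⟨Finset.mem_Icc.mpr ⟨h1, hy⟩, hay⟩
          · push_neg at hy
            have hxX : y - t - 1 ∈ X := by
              refine (hX (y - t - 1)).mpr ⟨by omega, by omega, ?_, by omega, fun i hi1 hi2 => ?_⟩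
              · have hb := h5 (y - t - 1) (by omega) (by omega)
                rw [show u.length + 1 - y + (y - t - 1) - 1 = u.length - t - 1 by omega,
                  getD_concat_lt u a one (by omega)] at hb
                have hbne := boundary_ne one u (by rw [← ht]; omega)
                rw [← ht] at hbne
                intro heq
                rw [heq] at hb
                exact hbne (Finset.mem_singleton.mp hb)
              · have := h5 i hi1 (by omega)
                rwa [show u.length + 1 - y + i - 1 = u.length - t - (y - t - 1) + i - 1 by omega,
                  getD_concat_lt u a one (by omega)] at this
            apply Finset.mem_union_right
            apply Finset.mem_image.mpr
            refine ⟨y - t - 1, Finset.mem_filter.mpr ⟨hxX, ?_⟩, by omega⟩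
            rw [show y - t - 1 + t + 1 = y by omega]
            exact ⟨h2, hay⟩
      have hguard : ¬ (Yval.sup id = s) := by
        intro hsup
        have hYn : Yval.Nonempty := by
          rcases Yval.eq_empty_or_nonempty with he | hn
          · rw [he, Finset.sup_empty] at hsup
            simp at hsup
            omega
          · exact hn
        obtain ⟨y, hyY, hsy⟩ := Finset.exists_mem_eq_sup Yval hYn id
        have hys : y = s := by rw [hsy] at hsup; simpa using hsup
        subst hys
        obtain ⟨h1, h2, h3, h4, h5⟩ := (hY y).mp hyY
        refine hmu' (u.length + 2 - y) ⟨by omega, by simp; omega, fun i hi1 hi2 => ?_⟩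
        rw [show u.length + 2 - y + i - 2 = u.length + 1 - y + i - 1 by omega]
        exact h5 i hi1 hi2
      refine ⟨Yval, 0, ?_, ?_, fun x => ?_⟩
      · rw [hstep]
        simp only [seedStep, if_neg ha]
        rw [hYdef] at hguard ⊢
        simp at hguard
        simp [hguard]
      · rw [tw_concat_ne one u ha]
      · rw [hY x]
        constructor
        · rintro ⟨h1, h2, h3, h4, h5⟩
          refine ⟨h1, h2, h3, by simp; omega, fun i hi1 hi2 => ?_⟩
          rw [show (u ++ [a]).length - 0 - x + i - 1 = u.length + 1 - x + i - 1 by simp]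
          exact h5 i hi1 hi2
        · rintro ⟨h1, h2, h3, h4, h5⟩
          refine ⟨h1, h2, h3, by simp at h4; omega, fun i hi1 hi2 => ?_⟩
          have := h5 i hi1 hi2
          rwa [show (u ++ [a]).length - 0 - x + i - 1 = u.length + 1 - x + i - 1 by simp] at this

/-- If `π` matches `w` at no position, then reading `w` from the initial state of `S_π`
ends in a non-final state `⟨X,t⟩` where `t` is the length of the longest suffix of `w`
made of the letter `1` only, and `X` is the set of non-`#` positions `x` of `π` such that
the prefix `π_1⋯π_x` matches the length-`x` suffix of `w₁⋯w_{p-t}` (with `p = |w|`). -/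
theorem stmt_1 [DecidableEq A] (one : A) (π : ℕ → Finset A) (s : ℕ)
    (hs : 1 ≤ s) (hone : ∀ i, 1 ≤ i → i ≤ s → one ∈ π i) (w : List A)
    (hnomatch : ∀ p, ¬ seedMatches one π s w p) :
    ∃ X t, seedRead one π s (some (∅, 0)) w = some (X, t) ∧
      t = (w.reverse.takeWhile fun a => a = one).length ∧
      ∀ x, x ∈ X ↔
        (1 ≤ x ∧ x ≤ s ∧ π x ≠ ({one} : Finset A) ∧ x ≤ w.length - t ∧
          ∀ i, 1 ≤ i → i ≤ x → w.getD (w.length - t - x + i - 1) one ∈ π i) := by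
  exact key one π s hs hone w hnomatch w List.prefix_rfl
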